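/- For all natural numbers m ≥ 0: hom(M, E_1^m) = 0, ext1(M, E_1^m) = 0, hom(E_1^m, M) = 0, ext1(E_1^m, M) = 1; hom(M, E_2^m) = 0, ext1(M, E_2^m) = 0, hom(E_2^m, M) = 1, ext1(E_2^m, M) = 0; hom(M, E_3^m) = 0, ext1(M, E_3^m) = 1, hom(E_3^m, M) = 0, ext1(E_3^m, M) = 0; hom(M, E_4^m) = 1, ext1(M, E_4^m) = 0, hom(E_4^m, M) = 0, ext1(E_4^m, M) = 0; hom(M', E_1^m) = 1, ext1(M', E_1^m) = 0, hom(E_1^m, M') = 0, ext1(E_1^m, M') = 0; hom(M', E_2^m) = 0, ext1(M', E_2^m) = 1, hom(E_2^m, M') = 0, ext1(E_2^m, M') = 0; hom(M', E_3^m) = 0, ext1(M', E_3^m) = 0, hom(E_3^m, M') = 1, ext1(E_3^m, M') = 0; hom(M', E_4^m) = 0, ext1(M', E_4^m) = 0, hom(E_4^m, M') = 0, ext1(E_4^m, M') = 1. Moreover hom(M, M') = 0, ext1(M, M') = 1, hom(M', M) = 0, and ext1(M', M) = 1. -/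

import Mathlib

noncomputable section

open Module

universe u

/-- A representation of the quiver `Q1` (vertices 1, 2, 3; arrows 1→3, 1→2, 2→3)
over the field `k`, with finite-dimensional vector spaces at the vertices. -/
structure RepQ1 (k : Type u) [Field k] where
  V1 : Type u
  V2 : Type u
  V3 : Type u
  [acg1 : AddCommGroup V1]
  [acg2 : AddCommGroup V2]
  [acg3 : AddCommGroup V3]
  [mod1 : Module k V1]
  [mod2 : Module k V2]
  [mod3 : Module k V3]
  [fd1 : FiniteDimensional k V1]
  [fd2 : FiniteDimensional k V2]
  [fd3 : FiniteDimensional k V3]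
  r13 : V1 →ₗ[k] V3
  r12 : V1 →ₗ[k] V2
  r23 : V2 →ₗ[k] V3

attribute [instance] RepQ1.acg1 RepQ1.acg2 RepQ1.acg3 RepQ1.mod1 RepQ1.mod2 RepQ1.mod3
  RepQ1.fd1 RepQ1.fd2 RepQ1.fd3

namespace RepQ1

variable {k : Type u} [Field k]

/-- The space of morphisms of representations `ρ → ρ'`:
triples `(f₁, f₂, f₃)` of linear maps commuting with the structure maps. -/
def homSpace (ρ ρ' : RepQ1 k) :
    Submodule k ((ρ.V1 →ₗ[k] ρ'.V1) × (ρ.V2 →ₗ[k] ρ'.V2) × (ρ.V3 →ₗ[k] ρ'.V3)) where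
  carrier := { f | f.2.2 ∘ₗ ρ.r13 = ρ'.r13 ∘ₗ f.1 ∧
                   f.2.1 ∘ₗ ρ.r12 = ρ'.r12 ∘ₗ f.1 ∧
                   f.2.2 ∘ₗ ρ.r23 = ρ'.r23 ∘ₗ f.2.1 }
  add_mem' := by
    rintro f g ⟨h1, h2, h3⟩ ⟨h1', h2', h3'⟩
    refine ⟨?_, ?_, ?_⟩ <;>
      simp only [Prod.fst_add, Prod.snd_add, LinearMap.add_comp, LinearMap.comp_add,
        h1, h2, h3, h1', h2', h3']
  zero_mem' := by
    refine ⟨?_, ?_, ?_⟩ <;> simp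
  smul_mem' := by
    rintro c f ⟨h1, h2, h3⟩
    refine ⟨?_, ?_, ?_⟩ <;>
      simp only [Prod.smul_fst, Prod.smul_snd, LinearMap.smul_comp, LinearMap.comp_smul,
        h1, h2, h3]

/-- `hom ρ ρ'` is the `k`-dimension of the space of morphisms of representations `ρ → ρ'`. -/
def hom (ρ ρ' : RepQ1 k) : ℕ := finrank k (homSpace ρ ρ')

/-- The linear map `Φ` whose cokernel computes `Ext¹(ρ, ρ')`. -/
def phi (ρ ρ' : RepQ1 k) :
    ((ρ.V1 →ₗ[k] ρ'.V1) × (ρ.V2 →ₗ[k] ρ'.V2) × (ρ.V3 →ₗ[k] ρ'.V3)) →ₗ[k]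
      ((ρ.V1 →ₗ[k] ρ'.V3) × (ρ.V1 →ₗ[k] ρ'.V2) × (ρ.V2 →ₗ[k] ρ'.V3)) where
  toFun g := (g.2.2 ∘ₗ ρ.r13 - ρ'.r13 ∘ₗ g.1,
              g.2.1 ∘ₗ ρ.r12 - ρ'.r12 ∘ₗ g.1,
              g.2.2 ∘ₗ ρ.r23 - ρ'.r23 ∘ₗ g.2.1)
  map_add' g h := by
    refine Prod.ext ?_ (Prod.ext ?_ ?_) <;>
      · simp only [Prod.fst_add, Prod.snd_add, LinearMap.add_comp, LinearMap.comp_add]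
        abel
  map_smul' c g := by
    refine Prod.ext ?_ (Prod.ext ?_ ?_) <;>
      simp [LinearMap.smul_comp, LinearMap.comp_smul, smul_sub]

/-- `ext1 ρ ρ'` is the `k`-dimension of the cokernel of `Φ`; it equals
`dim Ext¹(ρ, ρ')` in the abelian category of representations of `Q1`. -/
def ext1 (ρ ρ' : RepQ1 k) : ℕ :=
  finrank k (((ρ.V1 →ₗ[k] ρ'.V3) × (ρ.V1 →ₗ[k] ρ'.V2) × (ρ.V2 →ₗ[k] ρ'.V3)) ⧸
    LinearMap.range (phi ρ ρ'))

/-- A representation is exceptional if `hom ρ ρ = 1` and `ext1 ρ ρ = 0`. -/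
def IsExceptional (ρ : RepQ1 k) : Prop := hom ρ ρ = 1 ∧ ext1 ρ ρ = 0

/-- Isomorphism of representations of `Q1`. -/
def Iso (ρ ρ' : RepQ1 k) : Prop :=
  ∃ (e1 : ρ.V1 ≃ₗ[k] ρ'.V1) (e2 : ρ.V2 ≃ₗ[k] ρ'.V2) (e3 : ρ.V3 ≃ₗ[k] ρ'.V3),
    e3.toLinearMap ∘ₗ ρ.r13 = ρ'.r13 ∘ₗ e1.toLinearMap ∧
    e2.toLinearMap ∘ₗ ρ.r12 = ρ'.r12 ∘ₗ e1.toLinearMap ∧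
    e3.toLinearMap ∘ₗ ρ.r23 = ρ'.r23 ∘ₗ e2.toLinearMap

end RepQ1

variable (k : Type u) [Field k]

/-- `π₊^m : k^{m+1} → k^m`, `(a₁,…,a_{m+1}) ↦ (a₁,…,a_m)`. -/
def piPlus (m : ℕ) : (Fin (m + 1) → k) →ₗ[k] (Fin m → k) :=
  LinearMap.funLeft k k Fin.castSucc

/-- `π₋^m : k^{m+1} → k^m`, `(a₁,…,a_{m+1}) ↦ (a₂,…,a_{m+1})`. -/
def piMinus (m : ℕ) : (Fin (m + 1) → k) →ₗ[k] (Fin m → k) :=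
  LinearMap.funLeft k k Fin.succ

/-- `j₊^m : k^m → k^{m+1}`, `(a₁,…,a_m) ↦ (a₁,…,a_m,0)`. -/
def jPlus (m : ℕ) : (Fin m → k) →ₗ[k] (Fin (m + 1) → k) where
  toFun a := Fin.snoc a 0
  map_add' a b := by
    ext i
    induction i using Fin.lastCases <;> simp
  map_smul' c a := by
    ext i
    induction i using Fin.lastCases <;> simp

/-- `j₋^m : k^m → k^{m+1}`, `(a₁,…,a_m) ↦ (0,a₁,…,a_m)`. -/
def jMinus (m : ℕ) : (Fin m → k) →ₗ[k] (Fin (m + 1) → k) where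
  toFun a := Fin.cons 0 a
  map_add' a b := by
    ext i
    induction i using Fin.cases <;> simp
  map_smul' c a := by
    ext i
    induction i using Fin.cases <;> simp

/-- The representation `E₁^m = (k^{m+1}, k^m, k^m)` with `ρ₁₃ = π₊^m`, `ρ₁₂ = π₋^m`, `ρ₂₃ = id`. -/
def E1 (m : ℕ) : RepQ1 k where
  V1 := Fin (m + 1) → k
  V2 := Fin m → k
  V3 := Fin m → k
  r13 := piPlus k m
  r12 := piMinus k m
  r23 := LinearMap.id

/-- The representation `E₂^m = (k^m, k^{m+1}, k^{m+1})` with `ρ₁₃ = j₊^m`, `ρ₁₂ = j₋^m`, `ρ₂₃ = id`. -/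
def E2 (m : ℕ) : RepQ1 k where
  V1 := Fin m → k
  V2 := Fin (m + 1) → k
  V3 := Fin (m + 1) → k
  r13 := jPlus k m
  r12 := jMinus k m
  r23 := LinearMap.id

/-- The representation `E₃^m = (k^m, k^m, k^{m+1})` with `ρ₁₃ = j₊^m`, `ρ₁₂ = id`, `ρ₂₃ = j₋^m`. -/
def E3 (m : ℕ) : RepQ1 k where
  V1 := Fin m → k
  V2 := Fin m → k
  V3 := Fin (m + 1) → k
  r13 := jPlus k m
  r12 := LinearMap.id
  r23 := jMinus k m

/-- The representation `E₄^m = (k^{m+1}, k^{m+1}, k^m)` with `ρ₁₃ = π₊^m`, `ρ₁₂ = id`, `ρ₂₃ = π₋^m`. -/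
def E4 (m : ℕ) : RepQ1 k where
  V1 := Fin (m + 1) → k
  V2 := Fin (m + 1) → k
  V3 := Fin m → k
  r13 := piPlus k m
  r12 := LinearMap.id
  r23 := piMinus k m

/-- The representation `M = (0, k, 0)` with zero structure maps. -/
def Mrep : RepQ1 k where
  V1 := Fin 0 → k
  V2 := Fin 1 → k
  V3 := Fin 0 → k
  r13 := 0
  r12 := 0
  r23 := 0

/-- The representation `M' = (k, 0, k)` with `ρ₁₃ = id` and the other structure maps zero. -/
def Mprep : RepQ1 k where
  V1 := Fin 1 → k
  V2 := Fin 0 → k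
  V3 := Fin 1 → k
  r13 := LinearMap.id
  r12 := 0
  r23 := 0

namespace RepQ1

variable {k : Type u} [Field k]

/-- An exceptional pair `(X, Y)`: both `X` and `Y` are exceptional and
`hom (Y, X) = 0` and `ext1 (Y, X) = 0`. -/
def IsExceptionalPair (X Y : RepQ1 k) : Prop :=
  X.IsExceptional ∧ Y.IsExceptional ∧ hom Y X = 0 ∧ ext1 Y X = 0

/-- An exceptional triple `(A, B, C)`: `(A,B)`, `(B,C)` and `(A,C)` are exceptional pairs. -/
def IsExceptionalTriple (A B C : RepQ1 k) : Prop :=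
  IsExceptionalPair A B ∧ IsExceptionalPair B C ∧ IsExceptionalPair A C

/-- A morphism of representations of `Q1`. -/
structure Homo (ρ ρ' : RepQ1 k) where
  f1 : ρ.V1 →ₗ[k] ρ'.V1
  f2 : ρ.V2 →ₗ[k] ρ'.V2
  f3 : ρ.V3 →ₗ[k] ρ'.V3
  comm13 : f3 ∘ₗ ρ.r13 = ρ'.r13 ∘ₗ f1
  comm12 : f2 ∘ₗ ρ.r12 = ρ'.r12 ∘ₗ f1
  comm23 : f3 ∘ₗ ρ.r23 = ρ'.r23 ∘ₗ f2

/-- `0 → A → C → B → 0` is a short exact sequence of representations of `Q1`: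
at each vertex the induced sequence of vector spaces is short exact. -/
def IsSES {A C B : RepQ1 k} (f : Homo A C) (g : Homo C B) : Prop :=
  Function.Injective f.f1 ∧ Function.Injective f.f2 ∧ Function.Injective f.f3 ∧
  Function.Surjective g.f1 ∧ Function.Surjective g.f2 ∧ Function.Surjective g.f3 ∧
  LinearMap.range f.f1 = LinearMap.ker g.f1 ∧
  LinearMap.range f.f2 = LinearMap.ker g.f2 ∧
  LinearMap.range f.f3 = LinearMap.ker g.f3

/-- A representation is zero when all its vector spaces are zero. -/
def IsZeroRep (ρ : RepQ1 k) : Prop :=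
  Subsingleton ρ.V1 ∧ Subsingleton ρ.V2 ∧ Subsingleton ρ.V3

end RepQ1

/-- The (vertexwise) direct sum of two representations of `Q1`. -/
def RepQ1.dsum {k : Type u} [Field k] (ρ σ : RepQ1 k) : RepQ1 k where
  V1 := ρ.V1 × σ.V1
  V2 := ρ.V2 × σ.V2
  V3 := ρ.V3 × σ.V3
  r13 := ρ.r13.prodMap σ.r13
  r12 := ρ.r12.prodMap σ.r12
  r23 := ρ.r23.prodMap σ.r23



/-! ### Auxiliary lemmas -/

section Aux

variable {k : Type u} [Field k]

lemma RepQ1.mem_homSpace_iff {ρ ρ' : RepQ1 k}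
    (f : (ρ.V1 →ₗ[k] ρ'.V1) × (ρ.V2 →ₗ[k] ρ'.V2) × (ρ.V3 →ₗ[k] ρ'.V3)) :
    f ∈ RepQ1.homSpace ρ ρ' ↔ (f.2.2 ∘ₗ ρ.r13 = ρ'.r13 ∘ₗ f.1 ∧
                   f.2.1 ∘ₗ ρ.r12 = ρ'.r12 ∘ₗ f.1 ∧
                   f.2.2 ∘ₗ ρ.r23 = ρ'.r23 ∘ₗ f.2.1) := Iff.rfl

lemma RepQ1.ker_phi (ρ ρ' : RepQ1 k) :
    LinearMap.ker (RepQ1.phi ρ ρ') = RepQ1.homSpace ρ ρ' := by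
  ext f
  simp only [LinearMap.mem_ker, RepQ1.mem_homSpace_iff, RepQ1.phi, LinearMap.coe_mk,
    AddHom.coe_mk, Prod.mk_eq_zero, sub_eq_zero]

lemma RepQ1.ext1_add_eq (ρ ρ' : RepQ1 k) :
    RepQ1.ext1 ρ ρ' + (finrank k ρ.V1 * finrank k ρ'.V1 + finrank k ρ.V2 * finrank k ρ'.V2
      + finrank k ρ.V3 * finrank k ρ'.V3)
    = RepQ1.hom ρ ρ' + (finrank k ρ.V1 * finrank k ρ'.V3 + finrank k ρ.V1 * finrank k ρ'.V2
      + finrank k ρ.V2 * finrank k ρ'.V3) := by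
  have h1 := LinearMap.finrank_range_add_finrank_ker (RepQ1.phi ρ ρ')
  have h2 := Submodule.finrank_quotient_add_finrank (LinearMap.range (RepQ1.phi ρ ρ'))
  rw [RepQ1.ker_phi] at h1
  simp only [Module.finrank_prod, Module.finrank_linearMap] at h1 h2
  unfold RepQ1.ext1 RepQ1.hom
  omega

lemma RepQ1.hom_eq_zero_aux {ρ ρ' : RepQ1 k} (h : RepQ1.homSpace ρ ρ' = ⊥) :
    RepQ1.hom ρ ρ' = 0 := by rw [RepQ1.hom, h, finrank_bot]

lemma RepQ1.hom_eq_one_aux {ρ ρ' : RepQ1 k}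
    {x : (ρ.V1 →ₗ[k] ρ'.V1) × (ρ.V2 →ₗ[k] ρ'.V2) × (ρ.V3 →ₗ[k] ρ'.V3)}
    (h : RepQ1.homSpace ρ ρ' = Submodule.span k {x}) (hx : x ≠ 0) :
    RepQ1.hom ρ ρ' = 1 := by rw [RepQ1.hom, h, finrank_span_singleton hx]

variable (k)

@[simp] lemma piPlus_apply (m : ℕ) (a : Fin (m+1) → k) (i : Fin m) :
    piPlus k m a i = a i.castSucc := rfl
@[simp] lemma piMinus_apply (m : ℕ) (a : Fin (m+1) → k) (i : Fin m) :
    piMinus k m a i = a i.succ := rfl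
@[simp] lemma jPlus_apply (m : ℕ) (a : Fin m → k) : jPlus k m a = Fin.snoc a 0 := rfl
@[simp] lemma jMinus_apply (m : ℕ) (a : Fin m → k) : jMinus k m a = Fin.cons 0 a := rfl

lemma jMinus_injective (m : ℕ) : Function.Injective (jMinus k m) := by
  intro a b h
  have := congrArg (piMinus k m) h
  funext i; simpa using congrFun this i

lemma piMinus_surjective (m : ℕ) : Function.Surjective (piMinus k m) := by
  intro b
  exact ⟨jMinus k m b, by ext i; simp⟩

variable {k}

lemma dom_subsingleton {A B : Type u} [AddCommGroup A] [AddCommGroup B] [Module k A]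
    [Module k B] [Subsingleton A] (f : A →ₗ[k] B) : f = 0 := by
  ext x; rw [Subsingleton.elim x 0, map_zero]; rfl

lemma lin_eq_of_cod_sub {A B : Type u} [AddCommGroup A] [AddCommGroup B] [Module k A]
    [Module k B] [Subsingleton B] (f g : A →ₗ[k] B) : f = g := by
  ext x; exact Subsingleton.elim _ _

lemma cod_subsingleton {A B : Type u} [AddCommGroup A] [AddCommGroup B] [Module k A]
    [Module k B] [Subsingleton B] (f : A →ₗ[k] B) : f = 0 := lin_eq_of_cod_sub f 0

lemma comp_zero_surj {A B C : Type u} [AddCommGroup A] [AddCommGroup B] [AddCommGroup C]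
    [Module k A] [Module k B] [Module k C] {f : B →ₗ[k] C} {g : A →ₗ[k] B}
    (h : f ∘ₗ g = 0) (hg : Function.Surjective g) : f = 0 := by
  ext b
  obtain ⟨a, rfl⟩ := hg b
  exact congrFun (congrArg DFunLike.coe h) a

lemma comp_zero_inj {A B C : Type u} [AddCommGroup A] [AddCommGroup B] [AddCommGroup C]
    [Module k A] [Module k B] [Module k C] {f : A →ₗ[k] B} {g : B →ₗ[k] C}
    (h : g ∘ₗ f = 0) (hg : Function.Injective g) : f = 0 := by
  ext a
  apply hg
  simpa using congrFun (congrArg DFunLike.coe h) a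

variable (k)

/-- `k¹ → k^{m+1}`, `a ↦ (a 0, 0, …, 0)`. -/
def gIn (m : ℕ) : (Fin 1 → k) →ₗ[k] (Fin (m+1) → k) :=
  LinearMap.single k (fun _ => k) 0 ∘ₗ LinearMap.proj 0

/-- `k^{m+1} → k¹`, `a ↦ a 0`. -/
def gOut (m : ℕ) : (Fin (m+1) → k) →ₗ[k] (Fin 1 → k) :=
  LinearMap.pi (fun _ => LinearMap.proj 0)

@[simp] lemma gIn_apply (m : ℕ) (a : Fin 1 → k) : gIn k m a = Pi.single 0 (a 0) := rfl
@[simp] lemma gOut_apply (m : ℕ) (a : Fin (m+1) → k) (i : Fin 1) : gOut k m a i = a 0 := rfl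

lemma piMinus_comp_gIn (m : ℕ) : piMinus k m ∘ₗ gIn k m = 0 := by
  ext a i
  simp [Pi.single_eq_of_ne (Fin.succ_ne_zero i)]

lemma gOut_comp_jMinus (m : ℕ) : gOut k m ∘ₗ jMinus k m = 0 := by
  ext a i; simp

lemma gIn_ne_zero (m : ℕ) : gIn k m ≠ 0 := by
  intro h
  have := congrFun (congrFun (congrArg DFunLike.coe h) (fun _ => (1:k))) 0
  simp at this

lemma gOut_ne_zero (m : ℕ) : gOut k m ≠ 0 := by
  intro h
  have := congrFun (congrFun (congrArg DFunLike.coe h) (fun _ => (1:k))) 0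
  simp at this

variable {k}

lemma eq_smul_gIn {m : ℕ} (f : (Fin 1 → k) →ₗ[k] (Fin (m+1) → k))
    (h : piMinus k m ∘ₗ f = 0) : f = (f (fun _ => 1) 0) • gIn k m := by
  apply LinearMap.ext; intro a; funext i
  have ha : a = a 0 • (fun _ => (1:k)) := by
    ext j
    have : j = 0 := Subsingleton.elim _ _
    simp [this]
  rw [ha, map_smul, map_smul]
  induction i using Fin.cases with
  | zero => simp [mul_comm]
  | succ j =>
    have h1 : f (fun _ => (1:k)) j.succ = 0 := by
      simpa using congrFun (congrFun (congrArg DFunLike.coe h) (fun _ => (1:k))) j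
    simp [h1, Pi.single_eq_of_ne (Fin.succ_ne_zero j)]

lemma eq_smul_gOut {m : ℕ} (f : (Fin (m+1) → k) →ₗ[k] (Fin 1 → k))
    (h : f ∘ₗ jMinus k m = 0) :
    f = (f (Pi.single (0 : Fin (m+1)) (1:k)) 0) • gOut k m := by
  apply LinearMap.ext; intro a; funext i
  have ha : a = a 0 • (Pi.single (0 : Fin (m+1)) (1:k) : Fin (m+1) → k)
      + jMinus k m (Fin.tail a) := by
    ext j
    induction j using Fin.cases with
    | zero => simp
    | succ l => simp [Pi.single_eq_of_ne (Fin.succ_ne_zero l), Fin.tail]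
  have hz : f (jMinus k m (Fin.tail a)) = 0 := by
    simpa using congrFun (congrArg DFunLike.coe h) (Fin.tail a)
  have hi : i = 0 := Subsingleton.elim _ _
  rw [ha, map_add, map_smul, hz]
  simp [hi, mul_comm]

end Aux

section Instances

variable (k : Type u) [Field k]

instance : Subsingleton ((Mrep k).V1) := inferInstanceAs (Subsingleton (Fin 0 → k))
instance : Subsingleton ((Mrep k).V3) := inferInstanceAs (Subsingleton (Fin 0 → k))
instance : Subsingleton ((Mprep k).V2) := inferInstanceAs (Subsingleton (Fin 0 → k))

variable (m : ℕ)

lemma E1_r13 : (E1 k m).r13 = piPlus k m := rfl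
lemma E1_r12 : (E1 k m).r12 = piMinus k m := rfl
lemma E1_r23 : (E1 k m).r23 = LinearMap.id := rfl
lemma E2_r13 : (E2 k m).r13 = jPlus k m := rfl
lemma E2_r12 : (E2 k m).r12 = jMinus k m := rfl
lemma E2_r23 : (E2 k m).r23 = LinearMap.id := rfl
lemma E3_r13 : (E3 k m).r13 = jPlus k m := rfl
lemma E3_r12 : (E3 k m).r12 = LinearMap.id := rfl
lemma E3_r23 : (E3 k m).r23 = jMinus k m := rfl
lemma E4_r13 : (E4 k m).r13 = piPlus k m := rfl
lemma E4_r12 : (E4 k m).r12 = LinearMap.id := rfl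
lemma E4_r23 : (E4 k m).r23 = piMinus k m := rfl
lemma Mrep_r13 : (Mrep k).r13 = 0 := rfl
lemma Mrep_r12 : (Mrep k).r12 = 0 := rfl
lemma Mrep_r23 : (Mrep k).r23 = 0 := rfl
lemma Mprep_r13 : (Mprep k).r13 = LinearMap.id := rfl
lemma Mprep_r12 : (Mprep k).r12 = 0 := rfl
lemma Mprep_r23 : (Mprep k).r23 = 0 := rfl

end Instances

section Dims

variable (k : Type u) [Field k] (m : ℕ)

lemma dim_E1_V1 : finrank k ((E1 k m).V1) = m + 1 := Module.finrank_fin_fun k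
lemma dim_E1_V2 : finrank k ((E1 k m).V2) = m := Module.finrank_fin_fun k
lemma dim_E1_V3 : finrank k ((E1 k m).V3) = m := Module.finrank_fin_fun k
lemma dim_E2_V1 : finrank k ((E2 k m).V1) = m := Module.finrank_fin_fun k
lemma dim_E2_V2 : finrank k ((E2 k m).V2) = m + 1 := Module.finrank_fin_fun k
lemma dim_E2_V3 : finrank k ((E2 k m).V3) = m + 1 := Module.finrank_fin_fun k
lemma dim_E3_V1 : finrank k ((E3 k m).V1) = m := Module.finrank_fin_fun k
lemma dim_E3_V2 : finrank k ((E3 k m).V2) = m := Module.finrank_fin_fun k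
lemma dim_E3_V3 : finrank k ((E3 k m).V3) = m + 1 := Module.finrank_fin_fun k
lemma dim_E4_V1 : finrank k ((E4 k m).V1) = m + 1 := Module.finrank_fin_fun k
lemma dim_E4_V2 : finrank k ((E4 k m).V2) = m + 1 := Module.finrank_fin_fun k
lemma dim_E4_V3 : finrank k ((E4 k m).V3) = m := Module.finrank_fin_fun k
lemma dim_Mrep_V1 : finrank k ((Mrep k).V1) = 0 := Module.finrank_fin_fun k
lemma dim_Mrep_V2 : finrank k ((Mrep k).V2) = 1 := Module.finrank_fin_fun k
lemma dim_Mrep_V3 : finrank k ((Mrep k).V3) = 0 := Module.finrank_fin_fun k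
lemma dim_Mprep_V1 : finrank k ((Mprep k).V1) = 1 := Module.finrank_fin_fun k
lemma dim_Mprep_V2 : finrank k ((Mprep k).V2) = 0 := Module.finrank_fin_fun k
lemma dim_Mprep_V3 : finrank k ((Mprep k).V3) = 1 := Module.finrank_fin_fun k

end Dims

section HomComputations

variable (k : Type u) [Field k] (m : ℕ)

lemma hom_M_E1 : RepQ1.hom (Mrep k) (E1 k m) = 0 := by
  apply RepQ1.hom_eq_zero_aux
  rw [eq_bot_iff]
  intro f hf
  obtain ⟨h13, h12, h23⟩ := (RepQ1.mem_homSpace_iff f).mp hf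
  obtain ⟨f1, f2, f3⟩ := f
  have hf1 : f1 = 0 := dom_subsingleton f1
  have hf3 : f3 = 0 := dom_subsingleton f3
  rw [hf3, E1_r23] at h23
  simp only [LinearMap.zero_comp, LinearMap.id_comp] at h23
  change 0 = f2 at h23
  simp [Submodule.mem_bot, Prod.ext_iff, hf1, hf3, ← h23]

lemma hom_M_E2 : RepQ1.hom (Mrep k) (E2 k m) = 0 := by
  apply RepQ1.hom_eq_zero_aux
  rw [eq_bot_iff]
  intro f hf
  obtain ⟨h13, h12, h23⟩ := (RepQ1.mem_homSpace_iff f).mp hf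
  obtain ⟨f1, f2, f3⟩ := f
  have hf1 : f1 = 0 := dom_subsingleton f1
  have hf3 : f3 = 0 := dom_subsingleton f3
  rw [hf3, E2_r23] at h23
  simp only [LinearMap.zero_comp, LinearMap.id_comp] at h23
  change 0 = f2 at h23
  simp [Submodule.mem_bot, Prod.ext_iff, hf1, hf3, ← h23]

lemma hom_M_E3 : RepQ1.hom (Mrep k) (E3 k m) = 0 := by
  apply RepQ1.hom_eq_zero_aux
  rw [eq_bot_iff]
  intro f hf
  obtain ⟨h13, h12, h23⟩ := (RepQ1.mem_homSpace_iff f).mp hf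
  obtain ⟨f1, f2, f3⟩ := f
  have hf1 : f1 = 0 := dom_subsingleton f1
  have hf3 : f3 = 0 := dom_subsingleton f3
  rw [hf3, E3_r23] at h23
  simp only [LinearMap.zero_comp] at h23
  have hf2 : f2 = 0 := comp_zero_inj h23.symm (jMinus_injective k m)
  simp [Submodule.mem_bot, Prod.ext_iff, hf1, hf2, hf3]

lemma hom_E1_M : RepQ1.hom (E1 k m) (Mrep k) = 0 := by
  apply RepQ1.hom_eq_zero_aux
  rw [eq_bot_iff]
  intro f hf
  obtain ⟨h13, h12, h23⟩ := (RepQ1.mem_homSpace_iff f).mp hf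
  obtain ⟨f1, f2, f3⟩ := f
  have hf1 : f1 = 0 := cod_subsingleton f1
  have hf3 : f3 = 0 := cod_subsingleton f3
  rw [hf1, E1_r12] at h12
  simp only [LinearMap.comp_zero] at h12
  have hf2 : f2 = 0 := comp_zero_surj h12 (piMinus_surjective k m)
  simp [Submodule.mem_bot, Prod.ext_iff, hf1, hf2, hf3]

lemma hom_E3_M : RepQ1.hom (E3 k m) (Mrep k) = 0 := by
  apply RepQ1.hom_eq_zero_aux
  rw [eq_bot_iff]
  intro f hf
  obtain ⟨h13, h12, h23⟩ := (RepQ1.mem_homSpace_iff f).mp hf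
  obtain ⟨f1, f2, f3⟩ := f
  have hf1 : f1 = 0 := cod_subsingleton f1
  have hf3 : f3 = 0 := cod_subsingleton f3
  rw [hf1, E3_r12] at h12
  simp only [LinearMap.comp_zero, LinearMap.comp_id] at h12
  change f2 = 0 at h12
  simp [Submodule.mem_bot, Prod.ext_iff, hf1, h12, hf3]

lemma hom_E4_M : RepQ1.hom (E4 k m) (Mrep k) = 0 := by
  apply RepQ1.hom_eq_zero_aux
  rw [eq_bot_iff]
  intro f hf
  obtain ⟨h13, h12, h23⟩ := (RepQ1.mem_homSpace_iff f).mp hf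
  obtain ⟨f1, f2, f3⟩ := f
  have hf1 : f1 = 0 := cod_subsingleton f1
  have hf3 : f3 = 0 := cod_subsingleton f3
  rw [hf1, E4_r12] at h12
  simp only [LinearMap.comp_zero, LinearMap.comp_id] at h12
  change f2 = 0 at h12
  simp [Submodule.mem_bot, Prod.ext_iff, hf1, h12, hf3]

lemma hom_M_Mp : RepQ1.hom (Mrep k) (Mprep k) = 0 := by
  apply RepQ1.hom_eq_zero_aux
  rw [eq_bot_iff]
  intro f hf
  obtain ⟨f1, f2, f3⟩ := f
  have hf1 : f1 = 0 := dom_subsingleton f1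
  have hf2 : f2 = 0 := cod_subsingleton f2
  have hf3 : f3 = 0 := dom_subsingleton f3
  simp [Submodule.mem_bot, Prod.ext_iff, hf1, hf2, hf3]

lemma hom_Mp_M : RepQ1.hom (Mprep k) (Mrep k) = 0 := by
  apply RepQ1.hom_eq_zero_aux
  rw [eq_bot_iff]
  intro f hf
  obtain ⟨f1, f2, f3⟩ := f
  have hf1 : f1 = 0 := cod_subsingleton f1
  have hf2 : f2 = 0 := dom_subsingleton f2
  have hf3 : f3 = 0 := cod_subsingleton f3
  simp [Submodule.mem_bot, Prod.ext_iff, hf1, hf2, hf3]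

lemma hom_E1_Mp : RepQ1.hom (E1 k m) (Mprep k) = 0 := by
  apply RepQ1.hom_eq_zero_aux
  rw [eq_bot_iff]
  intro f hf
  obtain ⟨h13, h12, h23⟩ := (RepQ1.mem_homSpace_iff f).mp hf
  obtain ⟨f1, f2, f3⟩ := f
  have hf2 : f2 = 0 := cod_subsingleton f2
  rw [hf2, E1_r23, Mprep_r23] at h23
  simp only [LinearMap.comp_zero, LinearMap.comp_id, LinearMap.zero_comp] at h23
  change f3 = 0 at h23
  rw [h23, E1_r13, Mprep_r13] at h13
  simp only [LinearMap.zero_comp, LinearMap.id_comp] at h13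
  change 0 = f1 at h13
  simp [Submodule.mem_bot, Prod.ext_iff, ← h13, hf2, h23]

lemma hom_E2_Mp : RepQ1.hom (E2 k m) (Mprep k) = 0 := by
  apply RepQ1.hom_eq_zero_aux
  rw [eq_bot_iff]
  intro f hf
  obtain ⟨h13, h12, h23⟩ := (RepQ1.mem_homSpace_iff f).mp hf
  obtain ⟨f1, f2, f3⟩ := f
  have hf2 : f2 = 0 := cod_subsingleton f2
  rw [hf2, E2_r23, Mprep_r23] at h23
  simp only [LinearMap.comp_zero, LinearMap.comp_id, LinearMap.zero_comp] at h23
  change f3 = 0 at h23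
  rw [h23, E2_r13, Mprep_r13] at h13
  simp only [LinearMap.zero_comp, LinearMap.id_comp] at h13
  change 0 = f1 at h13
  simp [Submodule.mem_bot, Prod.ext_iff, ← h13, hf2, h23]

lemma hom_E4_Mp : RepQ1.hom (E4 k m) (Mprep k) = 0 := by
  apply RepQ1.hom_eq_zero_aux
  rw [eq_bot_iff]
  intro f hf
  obtain ⟨h13, h12, h23⟩ := (RepQ1.mem_homSpace_iff f).mp hf
  obtain ⟨f1, f2, f3⟩ := f
  have hf2 : f2 = 0 := cod_subsingleton f2
  rw [hf2, E4_r23, Mprep_r23] at h23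
  simp only [LinearMap.zero_comp] at h23
  have hf3 : f3 = 0 := comp_zero_surj h23 (piMinus_surjective k m)
  rw [hf3, E4_r13, Mprep_r13] at h13
  simp only [LinearMap.zero_comp, LinearMap.id_comp] at h13
  change 0 = f1 at h13
  simp [Submodule.mem_bot, Prod.ext_iff, ← h13, hf2, hf3]

lemma hom_Mp_E2 : RepQ1.hom (Mprep k) (E2 k m) = 0 := by
  apply RepQ1.hom_eq_zero_aux
  rw [eq_bot_iff]
  intro f hf
  obtain ⟨h13, h12, h23⟩ := (RepQ1.mem_homSpace_iff f).mp hf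
  obtain ⟨f1, f2, f3⟩ := f
  have hf2 : f2 = 0 := dom_subsingleton f2
  rw [hf2, E2_r12] at h12
  simp only [LinearMap.zero_comp] at h12
  have hf1 : f1 = 0 := comp_zero_inj h12.symm (jMinus_injective k m)
  rw [hf1, Mprep_r13] at h13
  simp only [LinearMap.comp_zero, LinearMap.comp_id] at h13
  change f3 = 0 at h13
  simp [Submodule.mem_bot, Prod.ext_iff, h13, hf1, hf2]

lemma hom_Mp_E3 : RepQ1.hom (Mprep k) (E3 k m) = 0 := by
  apply RepQ1.hom_eq_zero_aux
  rw [eq_bot_iff]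
  intro f hf
  obtain ⟨h13, h12, h23⟩ := (RepQ1.mem_homSpace_iff f).mp hf
  obtain ⟨f1, f2, f3⟩ := f
  have hf2 : f2 = 0 := dom_subsingleton f2
  rw [hf2, E3_r12] at h12
  simp only [LinearMap.zero_comp, LinearMap.id_comp] at h12
  change 0 = f1 at h12
  rw [← h12, Mprep_r13] at h13
  simp only [LinearMap.comp_zero, LinearMap.comp_id] at h13
  change f3 = 0 at h13
  simp [Submodule.mem_bot, Prod.ext_iff, h13, ← h12, hf2]

lemma hom_Mp_E4 : RepQ1.hom (Mprep k) (E4 k m) = 0 := by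
  apply RepQ1.hom_eq_zero_aux
  rw [eq_bot_iff]
  intro f hf
  obtain ⟨h13, h12, h23⟩ := (RepQ1.mem_homSpace_iff f).mp hf
  obtain ⟨f1, f2, f3⟩ := f
  have hf2 : f2 = 0 := dom_subsingleton f2
  rw [hf2, E4_r12] at h12
  simp only [LinearMap.zero_comp, LinearMap.id_comp] at h12
  change 0 = f1 at h12
  rw [← h12, Mprep_r13] at h13
  simp only [LinearMap.comp_zero, LinearMap.comp_id] at h13
  change f3 = 0 at h13
  simp [Submodule.mem_bot, Prod.ext_iff, h13, ← h12, hf2]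

lemma hom_M_E4 : RepQ1.hom (Mrep k) (E4 k m) = 1 := by
  apply RepQ1.hom_eq_one_aux (x := (0, gIn k m, 0))
  · apply le_antisymm
    · intro f hf
      obtain ⟨h13, h12, h23⟩ := (RepQ1.mem_homSpace_iff f).mp hf
      obtain ⟨f1, f2, f3⟩ := f
      have hf1 : f1 = 0 := dom_subsingleton f1
      have hf3 : f3 = 0 := dom_subsingleton f3
      rw [hf3, E4_r23] at h23
      simp only [LinearMap.zero_comp] at h23
      have hf2 := eq_smul_gIn f2 h23.symm
      rw [Submodule.mem_span_singleton]
      refine ⟨f2 (fun _ => 1) 0, ?_⟩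
      rw [Prod.ext_iff, Prod.ext_iff]
      refine ⟨by simp [hf1], hf2.symm, by simp [hf3]⟩
    · rw [Submodule.span_le, Set.singleton_subset_iff]
      rw [SetLike.mem_coe, RepQ1.mem_homSpace_iff]
      refine ⟨?_, ?_, ?_⟩
      · simp only [Mrep_r13, E4_r13]
        simp
        exact (dom_subsingleton _).symm
      · simp only [Mrep_r12, E4_r12]
        exact (dom_subsingleton _).trans (dom_subsingleton _).symm
      · simp only [Mrep_r23, E4_r23]
        exact (LinearMap.zero_comp _).trans (piMinus_comp_gIn k m).symm
  · intro h
    exact gIn_ne_zero k m (congrArg (fun p => p.2.1) h)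

lemma hom_E2_M : RepQ1.hom (E2 k m) (Mrep k) = 1 := by
  apply RepQ1.hom_eq_one_aux (x := (0, gOut k m, 0))
  · apply le_antisymm
    · intro f hf
      obtain ⟨h13, h12, h23⟩ := (RepQ1.mem_homSpace_iff f).mp hf
      obtain ⟨f1, f2, f3⟩ := f
      have hf1 : f1 = 0 := cod_subsingleton f1
      have hf3 : f3 = 0 := cod_subsingleton f3
      rw [hf1, E2_r12, Mrep_r12] at h12
      simp only [LinearMap.comp_zero, LinearMap.zero_comp] at h12
      have hf2 := eq_smul_gOut f2 h12
      rw [Submodule.mem_span_singleton]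
      refine ⟨f2 (Pi.single (0 : Fin (m+1)) (1:k)) 0, ?_⟩
      rw [Prod.ext_iff, Prod.ext_iff]
      refine ⟨by simp [hf1], hf2.symm, by simp [hf3]⟩
    · rw [Submodule.span_le, Set.singleton_subset_iff]
      rw [SetLike.mem_coe, RepQ1.mem_homSpace_iff]
      refine ⟨?_, ?_, ?_⟩
      · exact lin_eq_of_cod_sub _ _
      · simp only [Mrep_r12, E2_r12]
        exact (gOut_comp_jMinus k m).trans (LinearMap.zero_comp _).symm
      · exact lin_eq_of_cod_sub _ _
  · intro h
    exact gOut_ne_zero k m (congrArg (fun p => p.2.1) h)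

lemma hom_Mp_E1 : RepQ1.hom (Mprep k) (E1 k m) = 1 := by
  apply RepQ1.hom_eq_one_aux (x := (gIn k m, 0, piPlus k m ∘ₗ gIn k m))
  · apply le_antisymm
    · intro f hf
      obtain ⟨h13, h12, h23⟩ := (RepQ1.mem_homSpace_iff f).mp hf
      obtain ⟨f1, f2, f3⟩ := f
      have hf2 : f2 = 0 := dom_subsingleton f2
      rw [hf2, E1_r12] at h12
      simp only [LinearMap.zero_comp] at h12
      have hf1 := eq_smul_gIn f1 h12.symm
      rw [Mprep_r13, E1_r13] at h13
      simp only [LinearMap.comp_id] at h13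
      change f3 = piPlus k m ∘ₗ f1 at h13
      rw [Submodule.mem_span_singleton]
      refine ⟨f1 (fun _ => 1) 0, ?_⟩
      rw [Prod.ext_iff, Prod.ext_iff]
      refine ⟨hf1.symm, by simp [hf2], ?_⟩
      simp only [Prod.smul_mk]
      rw [h13]
      show (f1 (fun _ => 1) 0 • (piPlus k m ∘ₗ gIn k m) :
        (Fin 1 → k) →ₗ[k] (Fin m → k)) = piPlus k m ∘ₗ f1
      apply LinearMap.ext; intro a; funext i
      have hp := congrFun (congrArg DFunLike.coe hf1) a
      simp [hp]
      change _ = piPlus k m (f1 a) i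
      refine Eq.trans ?_ (congrFun (congrArg (piPlus k m) hp) i).symm
      rfl
    · rw [Submodule.span_le, Set.singleton_subset_iff]
      rw [SetLike.mem_coe, RepQ1.mem_homSpace_iff]
      refine ⟨?_, ?_, ?_⟩
      · simp only [Mprep_r13, E1_r13]
        rfl
      · simp only [Mprep_r12, E1_r12]
        exact (LinearMap.zero_comp _).trans (piMinus_comp_gIn k m).symm
      · simp only [Mprep_r23, E1_r23]
        exact (dom_subsingleton _).trans (dom_subsingleton _).symm
  · intro h
    exact gIn_ne_zero k m (congrArg (fun p => p.1) h)

lemma hom_E3_Mp : RepQ1.hom (E3 k m) (Mprep k) = 1 := by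
  apply RepQ1.hom_eq_one_aux (x := (gOut k m ∘ₗ jPlus k m, 0, gOut k m))
  · apply le_antisymm
    · intro f hf
      obtain ⟨h13, h12, h23⟩ := (RepQ1.mem_homSpace_iff f).mp hf
      obtain ⟨f1, f2, f3⟩ := f
      have hf2 : f2 = 0 := cod_subsingleton f2
      rw [hf2, E3_r23, Mprep_r23] at h23
      simp only [LinearMap.comp_zero, LinearMap.zero_comp] at h23
      have hf3 := eq_smul_gOut f3 h23
      rw [Mprep_r13, E3_r13] at h13
      simp only [LinearMap.id_comp] at h13
      change f3 ∘ₗ jPlus k m = f1 at h13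
      rw [Submodule.mem_span_singleton]
      refine ⟨f3 (Pi.single (0 : Fin (m+1)) (1:k)) 0, ?_⟩
      rw [Prod.ext_iff, Prod.ext_iff]
      refine ⟨?_, by simp [hf2], hf3.symm⟩
      simp only [Prod.smul_mk]
      rw [← h13]
      conv_rhs => rw [hf3]
      exact (LinearMap.smul_comp ..).symm
    · rw [Submodule.span_le, Set.singleton_subset_iff]
      rw [SetLike.mem_coe, RepQ1.mem_homSpace_iff]
      refine ⟨?_, ?_, ?_⟩
      · simp only [Mprep_r13, E3_r13]
        rfl
      · exact lin_eq_of_cod_sub _ _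
      · simp only [Mprep_r23, E3_r23]
        exact (gOut_comp_jMinus k m).trans (LinearMap.zero_comp _).symm
  · intro h
    exact gOut_ne_zero k m (congrArg (fun p => p.2.2) h)

end HomComputations

/-- `hom`/`ext1` dimensions between `M`, `M'` and the exceptional objects `Eᵢ^m` of `Q1`. -/
theorem statement_5 (k : Type u) [Field k] [IsAlgClosed k] :
    (∀ m : ℕ,
      RepQ1.hom (Mrep k) (E1 k m) = 0 ∧ RepQ1.ext1 (Mrep k) (E1 k m) = 0 ∧
      RepQ1.hom (E1 k m) (Mrep k) = 0 ∧ RepQ1.ext1 (E1 k m) (Mrep k) = 1 ∧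
      RepQ1.hom (Mrep k) (E2 k m) = 0 ∧ RepQ1.ext1 (Mrep k) (E2 k m) = 0 ∧
      RepQ1.hom (E2 k m) (Mrep k) = 1 ∧ RepQ1.ext1 (E2 k m) (Mrep k) = 0 ∧
      RepQ1.hom (Mrep k) (E3 k m) = 0 ∧ RepQ1.ext1 (Mrep k) (E3 k m) = 1 ∧
      RepQ1.hom (E3 k m) (Mrep k) = 0 ∧ RepQ1.ext1 (E3 k m) (Mrep k) = 0 ∧
      RepQ1.hom (Mrep k) (E4 k m) = 1 ∧ RepQ1.ext1 (Mrep k) (E4 k m) = 0 ∧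
      RepQ1.hom (E4 k m) (Mrep k) = 0 ∧ RepQ1.ext1 (E4 k m) (Mrep k) = 0 ∧
      RepQ1.hom (Mprep k) (E1 k m) = 1 ∧ RepQ1.ext1 (Mprep k) (E1 k m) = 0 ∧
      RepQ1.hom (E1 k m) (Mprep k) = 0 ∧ RepQ1.ext1 (E1 k m) (Mprep k) = 0 ∧
      RepQ1.hom (Mprep k) (E2 k m) = 0 ∧ RepQ1.ext1 (Mprep k) (E2 k m) = 1 ∧
      RepQ1.hom (E2 k m) (Mprep k) = 0 ∧ RepQ1.ext1 (E2 k m) (Mprep k) = 0 ∧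
      RepQ1.hom (Mprep k) (E3 k m) = 0 ∧ RepQ1.ext1 (Mprep k) (E3 k m) = 0 ∧
      RepQ1.hom (E3 k m) (Mprep k) = 1 ∧ RepQ1.ext1 (E3 k m) (Mprep k) = 0 ∧
      RepQ1.hom (Mprep k) (E4 k m) = 0 ∧ RepQ1.ext1 (Mprep k) (E4 k m) = 0 ∧
      RepQ1.hom (E4 k m) (Mprep k) = 0 ∧ RepQ1.ext1 (E4 k m) (Mprep k) = 1) ∧
    RepQ1.hom (Mrep k) (Mprep k) = 0 ∧ RepQ1.ext1 (Mrep k) (Mprep k) = 1 ∧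
    RepQ1.hom (Mprep k) (Mrep k) = 0 ∧ RepQ1.ext1 (Mprep k) (Mrep k) = 1 := by
  constructor
  · intro m
    have hME1 := hom_M_E1 k m
    have hE1M := hom_E1_M k m
    have hME2 := hom_M_E2 k m
    have hE2M := hom_E2_M k m
    have hME3 := hom_M_E3 k m
    have hE3M := hom_E3_M k m
    have hME4 := hom_M_E4 k m
    have hE4M := hom_E4_M k m
    have hPE1 := hom_Mp_E1 k m
    have hE1P := hom_E1_Mp k m
    have hPE2 := hom_Mp_E2 k m
    have hE2P := hom_E2_Mp k m
    have hPE3 := hom_Mp_E3 k m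
    have hE3P := hom_E3_Mp k m
    have hPE4 := hom_Mp_E4 k m
    have hE4P := hom_E4_Mp k m
    have tME1 := RepQ1.ext1_add_eq (Mrep k) (E1 k m)
    simp only [dim_E1_V1, dim_E1_V2, dim_E1_V3, dim_E2_V1, dim_E2_V2, dim_E2_V3, dim_E3_V1, dim_E3_V2, dim_E3_V3, dim_E4_V1, dim_E4_V2, dim_E4_V3, dim_Mrep_V1, dim_Mrep_V2, dim_Mrep_V3, dim_Mprep_V1, dim_Mprep_V2, dim_Mprep_V3] at tME1
    have eME1 : RepQ1.ext1 (Mrep k) (E1 k m) = 0 := by omega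
    have tE1M := RepQ1.ext1_add_eq (E1 k m) (Mrep k)
    simp only [dim_E1_V1, dim_E1_V2, dim_E1_V3, dim_E2_V1, dim_E2_V2, dim_E2_V3, dim_E3_V1, dim_E3_V2, dim_E3_V3, dim_E4_V1, dim_E4_V2, dim_E4_V3, dim_Mrep_V1, dim_Mrep_V2, dim_Mrep_V3, dim_Mprep_V1, dim_Mprep_V2, dim_Mprep_V3] at tE1M
    have eE1M : RepQ1.ext1 (E1 k m) (Mrep k) = 1 := by omega
    have tME2 := RepQ1.ext1_add_eq (Mrep k) (E2 k m)
    simp only [dim_E1_V1, dim_E1_V2, dim_E1_V3, dim_E2_V1, dim_E2_V2, dim_E2_V3, dim_E3_V1, dim_E3_V2, dim_E3_V3, dim_E4_V1, dim_E4_V2, dim_E4_V3, dim_Mrep_V1, dim_Mrep_V2, dim_Mrep_V3, dim_Mprep_V1, dim_Mprep_V2, dim_Mprep_V3] at tME2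
    have eME2 : RepQ1.ext1 (Mrep k) (E2 k m) = 0 := by omega
    have tE2M := RepQ1.ext1_add_eq (E2 k m) (Mrep k)
    simp only [dim_E1_V1, dim_E1_V2, dim_E1_V3, dim_E2_V1, dim_E2_V2, dim_E2_V3, dim_E3_V1, dim_E3_V2, dim_E3_V3, dim_E4_V1, dim_E4_V2, dim_E4_V3, dim_Mrep_V1, dim_Mrep_V2, dim_Mrep_V3, dim_Mprep_V1, dim_Mprep_V2, dim_Mprep_V3] at tE2M
    have eE2M : RepQ1.ext1 (E2 k m) (Mrep k) = 0 := by omega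
    have tME3 := RepQ1.ext1_add_eq (Mrep k) (E3 k m)
    simp only [dim_E1_V1, dim_E1_V2, dim_E1_V3, dim_E2_V1, dim_E2_V2, dim_E2_V3, dim_E3_V1, dim_E3_V2, dim_E3_V3, dim_E4_V1, dim_E4_V2, dim_E4_V3, dim_Mrep_V1, dim_Mrep_V2, dim_Mrep_V3, dim_Mprep_V1, dim_Mprep_V2, dim_Mprep_V3] at tME3
    have eME3 : RepQ1.ext1 (Mrep k) (E3 k m) = 1 := by omega
    have tE3M := RepQ1.ext1_add_eq (E3 k m) (Mrep k)
    simp only [dim_E1_V1, dim_E1_V2, dim_E1_V3, dim_E2_V1, dim_E2_V2, dim_E2_V3, dim_E3_V1, dim_E3_V2, dim_E3_V3, dim_E4_V1, dim_E4_V2, dim_E4_V3, dim_Mrep_V1, dim_Mrep_V2, dim_Mrep_V3, dim_Mprep_V1, dim_Mprep_V2, dim_Mprep_V3] at tE3M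
    have eE3M : RepQ1.ext1 (E3 k m) (Mrep k) = 0 := by omega
    have tME4 := RepQ1.ext1_add_eq (Mrep k) (E4 k m)
    simp only [dim_E1_V1, dim_E1_V2, dim_E1_V3, dim_E2_V1, dim_E2_V2, dim_E2_V3, dim_E3_V1, dim_E3_V2, dim_E3_V3, dim_E4_V1, dim_E4_V2, dim_E4_V3, dim_Mrep_V1, dim_Mrep_V2, dim_Mrep_V3, dim_Mprep_V1, dim_Mprep_V2, dim_Mprep_V3] at tME4
    have eME4 : RepQ1.ext1 (Mrep k) (E4 k m) = 0 := by omega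
    have tE4M := RepQ1.ext1_add_eq (E4 k m) (Mrep k)
    simp only [dim_E1_V1, dim_E1_V2, dim_E1_V3, dim_E2_V1, dim_E2_V2, dim_E2_V3, dim_E3_V1, dim_E3_V2, dim_E3_V3, dim_E4_V1, dim_E4_V2, dim_E4_V3, dim_Mrep_V1, dim_Mrep_V2, dim_Mrep_V3, dim_Mprep_V1, dim_Mprep_V2, dim_Mprep_V3] at tE4M
    have eE4M : RepQ1.ext1 (E4 k m) (Mrep k) = 0 := by omega
    have tPE1 := RepQ1.ext1_add_eq (Mprep k) (E1 k m)
    simp only [dim_E1_V1, dim_E1_V2, dim_E1_V3, dim_E2_V1, dim_E2_V2, dim_E2_V3, dim_E3_V1, dim_E3_V2, dim_E3_V3, dim_E4_V1, dim_E4_V2, dim_E4_V3, dim_Mrep_V1, dim_Mrep_V2, dim_Mrep_V3, dim_Mprep_V1, dim_Mprep_V2, dim_Mprep_V3] at tPE1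
    have ePE1 : RepQ1.ext1 (Mprep k) (E1 k m) = 0 := by omega
    have tE1P := RepQ1.ext1_add_eq (E1 k m) (Mprep k)
    simp only [dim_E1_V1, dim_E1_V2, dim_E1_V3, dim_E2_V1, dim_E2_V2, dim_E2_V3, dim_E3_V1, dim_E3_V2, dim_E3_V3, dim_E4_V1, dim_E4_V2, dim_E4_V3, dim_Mrep_V1, dim_Mrep_V2, dim_Mrep_V3, dim_Mprep_V1, dim_Mprep_V2, dim_Mprep_V3] at tE1P
    have eE1P : RepQ1.ext1 (E1 k m) (Mprep k) = 0 := by omega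
    have tPE2 := RepQ1.ext1_add_eq (Mprep k) (E2 k m)
    simp only [dim_E1_V1, dim_E1_V2, dim_E1_V3, dim_E2_V1, dim_E2_V2, dim_E2_V3, dim_E3_V1, dim_E3_V2, dim_E3_V3, dim_E4_V1, dim_E4_V2, dim_E4_V3, dim_Mrep_V1, dim_Mrep_V2, dim_Mrep_V3, dim_Mprep_V1, dim_Mprep_V2, dim_Mprep_V3] at tPE2
    have ePE2 : RepQ1.ext1 (Mprep k) (E2 k m) = 1 := by omega
    have tE2P := RepQ1.ext1_add_eq (E2 k m) (Mprep k)
    simp only [dim_E1_V1, dim_E1_V2, dim_E1_V3, dim_E2_V1, dim_E2_V2, dim_E2_V3, dim_E3_V1, dim_E3_V2, dim_E3_V3, dim_E4_V1, dim_E4_V2, dim_E4_V3, dim_Mrep_V1, dim_Mrep_V2, dim_Mrep_V3, dim_Mprep_V1, dim_Mprep_V2, dim_Mprep_V3] at tE2P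
    have eE2P : RepQ1.ext1 (E2 k m) (Mprep k) = 0 := by omega
    have tPE3 := RepQ1.ext1_add_eq (Mprep k) (E3 k m)
    simp only [dim_E1_V1, dim_E1_V2, dim_E1_V3, dim_E2_V1, dim_E2_V2, dim_E2_V3, dim_E3_V1, dim_E3_V2, dim_E3_V3, dim_E4_V1, dim_E4_V2, dim_E4_V3, dim_Mrep_V1, dim_Mrep_V2, dim_Mrep_V3, dim_Mprep_V1, dim_Mprep_V2, dim_Mprep_V3] at tPE3
    have ePE3 : RepQ1.ext1 (Mprep k) (E3 k m) = 0 := by omega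
    have tE3P := RepQ1.ext1_add_eq (E3 k m) (Mprep k)
    simp only [dim_E1_V1, dim_E1_V2, dim_E1_V3, dim_E2_V1, dim_E2_V2, dim_E2_V3, dim_E3_V1, dim_E3_V2, dim_E3_V3, dim_E4_V1, dim_E4_V2, dim_E4_V3, dim_Mrep_V1, dim_Mrep_V2, dim_Mrep_V3, dim_Mprep_V1, dim_Mprep_V2, dim_Mprep_V3] at tE3P
    have eE3P : RepQ1.ext1 (E3 k m) (Mprep k) = 0 := by omega
    have tPE4 := RepQ1.ext1_add_eq (Mprep k) (E4 k m)
    simp only [dim_E1_V1, dim_E1_V2, dim_E1_V3, dim_E2_V1, dim_E2_V2, dim_E2_V3, dim_E3_V1, dim_E3_V2, dim_E3_V3, dim_E4_V1, dim_E4_V2, dim_E4_V3, dim_Mrep_V1, dim_Mrep_V2, dim_Mrep_V3, dim_Mprep_V1, dim_Mprep_V2, dim_Mprep_V3] at tPE4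
    have ePE4 : RepQ1.ext1 (Mprep k) (E4 k m) = 0 := by omega
    have tE4P := RepQ1.ext1_add_eq (E4 k m) (Mprep k)
    simp only [dim_E1_V1, dim_E1_V2, dim_E1_V3, dim_E2_V1, dim_E2_V2, dim_E2_V3, dim_E3_V1, dim_E3_V2, dim_E3_V3, dim_E4_V1, dim_E4_V2, dim_E4_V3, dim_Mrep_V1, dim_Mrep_V2, dim_Mrep_V3, dim_Mprep_V1, dim_Mprep_V2, dim_Mprep_V3] at tE4P
    have eE4P : RepQ1.ext1 (E4 k m) (Mprep k) = 1 := by omega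
    exact ⟨hME1, eME1, hE1M, eE1M, hME2, eME2, hE2M, eE2M, hME3, eME3, hE3M, eE3M,
      hME4, eME4, hE4M, eE4M, hPE1, ePE1, hE1P, eE1P, hPE2, ePE2, hE2P, eE2P,
      hPE3, ePE3, hE3P, eE3P, hPE4, ePE4, hE4P, eE4P⟩
  · have hMP := hom_M_Mp k
    have hPM := hom_Mp_M k
    have eMP := RepQ1.ext1_add_eq (Mrep k) (Mprep k)
    have ePM := RepQ1.ext1_add_eq (Mprep k) (Mrep k)
    simp only [dim_E1_V1, dim_E1_V2, dim_E1_V3, dim_E2_V1, dim_E2_V2, dim_E2_V3, dim_E3_V1, dim_E3_V2, dim_E3_V3, dim_E4_V1, dim_E4_V2, dim_E4_V3, dim_Mrep_V1, dim_Mrep_V2, dim_Mrep_V3, dim_Mprep_V1, dim_Mprep_V2, dim_Mprep_V3] at eMP ePM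
    exact ⟨hMP, by omega, hPM, by omega⟩
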